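/- A closed subset F of a hypergroup H is strongly normal in H (i.e., h*Fh ⊆ F for all h ∈ H) if and only if the quotient hypergroup H//F is thin. -/

import Mathlib

/-- A hypergroup: a set with a hypermultiplication, identity and involution
satisfying (H1), (H2), (H3). -/
structure Hypergroup (H : Type*) where
  hmul : H → H → Set H
  one : H
  star : H → H
  assoc : ∀ p q r : H, (⋃ x ∈ hmul q r, hmul p x) = ⋃ x ∈ hmul p q, hmul x r
  hmul_one : ∀ s : H, hmul s one = {s}
  inv_left : ∀ p q r : H, r ∈ hmul p q → q ∈ hmul (star p) r
  inv_right : ∀ p q r : H, r ∈ hmul p q → p ∈ hmul r (star q)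

namespace Hypergroup

variable {H : Type*} (G : Hypergroup H)

/-- Complex (set) product: `AB = ⋃_{a ∈ A, b ∈ B} ab`. -/
def smul (A B : Set H) : Set H := ⋃ a ∈ A, ⋃ b ∈ B, G.hmul a b

/-- `A* = { a* | a ∈ A }`. -/
def sstar (A : Set H) : Set H := G.star '' A

/-- A nonempty subset `F` is closed if `F*F ⊆ F`. -/
def IsClosed (F : Set H) : Prop := F.Nonempty ∧ G.smul (G.sstar F) F ⊆ F

/-- `F` is normal in `K`: `Fk ⊆ kF` for all `k ∈ K`. -/
def IsNormalIn (F K : Set H) : Prop := ∀ k ∈ K, G.smul F {k} ⊆ G.smul {k} F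

/-- `F` is strongly normal in `K`: `k*Fk ⊆ F` for all `k ∈ K`. -/
def IsStronglyNormalIn (F K : Set H) : Prop :=
  ∀ k ∈ K, G.smul (G.smul {G.star k} F) {k} ⊆ F

/-- An element `s` is thin if `s*s = {1}`. -/
def IsThinElem (s : H) : Prop := G.hmul (G.star s) s = {G.one}

/-- A hypergroup is thin if all elements are thin. -/
def IsThin : Prop := ∀ s : H, G.IsThinElem s

/-- The center `Z(H) = {h | hx = xh for all x, h*h = {1}}`. -/
def center : Set H :=
  {h | (∀ x : H, G.hmul h x = G.hmul x h) ∧ G.hmul (G.star h) h = {G.one}}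

/-- The class `h^F := FhF`. -/
def cls (F : Set H) (h : H) : Set H := G.smul (G.smul F {h}) F

/-- The quotient set `H//F := { h^F | h ∈ H }`. -/
def quotSet (F : Set H) : Set (Set H) := Set.range (G.cls F)

/-- The class `h^F` as an element of `H//F`. -/
def qcls (F : Set H) (h : H) : G.quotSet F := ⟨G.cls F h, h, rfl⟩

/-- The full preimage in `H` of the center of the quotient `H//T`:
`{h | h^T ∈ Z(H//T)}`, i.e. `h^T` commutes with all classes `y^T` and
`(h^T)*(h^T) = {1^T} = {T}`. -/
def qCenterPre (T : Set H) : Set H :=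
  {h | (∀ y : H, G.cls T '' (G.smul (G.smul {h} T) {y}) =
          G.cls T '' (G.smul (G.smul {y} T) {h})) ∧
       G.cls T '' (G.smul (G.smul {G.star h} T) {h}) = {T}}

/-- The upper central series: `Z₀(H) = {1}`, and `Zᵢ₊₁(H)` is the full preimage
of `Z(H//Zᵢ(H))`, i.e. `Zᵢ₊₁(H)//Zᵢ(H) = Z(H//Zᵢ(H))`. -/
def upperCentral : ℕ → Set H
  | 0 => {G.one}
  | n + 1 => G.qCenterPre (upperCentral n)

/-- A hypergroup is weakly nilpotent if `Zₙ(H) = H` for some `n`. -/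
def WeaklyNilpotent : Prop := ∃ n : ℕ, G.upperCentral n = Set.univ

/-- `F` is subnormal in `K` via a chain of successively normal closed subsets. -/
def IsSubnormalIn (F K : Set H) : Prop :=
  ∃ n : ℕ, ∃ C : ℕ → Set H, C 0 = F ∧ C n = K ∧
    ∀ i < n, C i ⊆ C (i + 1) ∧ G.IsClosed (C (i + 1)) ∧ G.IsNormalIn (C i) (C (i + 1))

/-- The quotient `K//N` is thin: `(k^N)*(k^N) = {1^N}` for all `k ∈ K`. -/
def QuotThin (N K : Set H) : Prop :=
  ∀ k ∈ K, G.cls N '' (G.smul (G.smul {G.star k} N) {k}) = {N}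

/-- A residually-thin chain from `{1}` to `K`. -/
def RTChainOn (K : Set H) (n : ℕ) (C : ℕ → Set H) : Prop :=
  C 0 = {G.one} ∧ C n = K ∧
    ∀ i < n, C i ⊆ C (i + 1) ∧ G.IsClosed (C (i + 1)) ∧ G.QuotThin (C i) (C (i + 1))

/-- The valency `n_K = ∏ |Cᵢ₊₁//Cᵢ|` computed along some RT chain for `K`. -/
def HasValencyOn (K : Set H) (m : ℕ) : Prop :=
  ∃ n C, G.RTChainOn K n C ∧
    m = ∏ i ∈ Finset.range n, Nat.card (G.cls (C i) '' C (i + 1))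

/-- A closed `p`-subset: a closed subset whose valency is a power of `p`. -/
def PSubsetOn (p : ℕ) (K : Set H) : Prop :=
  G.IsClosed K ∧ ∃ m k : ℕ, G.HasValencyOn K m ∧ m = p ^ k

/-- `h` is `p`-valenced in `K`: for every subnormal closed `p`-subset `U` of `K`
such that `(h*)^U h^U` consists of thin elements of the quotient,
`n_{(h*)^U h^U} = |(h*)^U h^U|` is a power of `p`. -/
def PValencedElemOn (p : ℕ) (K : Set H) (h : H) : Prop :=
  ∀ U : Set H, G.IsClosed U → U ⊆ K → G.IsSubnormalIn U K → G.PSubsetOn p U →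
    (∀ x ∈ G.smul (G.smul {G.star h} U) {h},
      G.cls U '' (G.smul (G.smul {G.star x} U) {x}) = {U}) →
    ∃ k : ℕ, Nat.card (G.cls U '' (G.smul (G.smul {G.star h} U) {h})) = p ^ k

/-- `K` is `p`-valenced if all its elements are. -/
def PValencedOn (p : ℕ) (K : Set H) : Prop := ∀ h ∈ K, G.PValencedElemOn p K h

end Hypergroup


namespace Hypergroup
section Aux
variable {H : Type*} (G : Hypergroup H)

lemma mem_smul_iff {A B : Set H} {x : H} :
    x ∈ G.smul A B ↔ ∃ a ∈ A, ∃ b ∈ B, x ∈ G.hmul a b := by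
  simp [Hypergroup.smul]

lemma one_mem_star_mul (x : H) : G.one ∈ G.hmul (G.star x) x := by
  have hx : x ∈ G.hmul x G.one := by rw [G.hmul_one]; rfl
  exact G.inv_left x G.one x hx

lemma star_star' (x : H) : G.star (G.star x) = x := by
  have h1 := G.inv_left (G.star x) x G.one (G.one_mem_star_mul x)
  rw [G.hmul_one] at h1
  exact h1.symm

lemma mem_one_mul (x : H) : x ∈ G.hmul G.one x := by
  have h := G.inv_right (G.star (G.star x)) (G.star x) G.one
    (G.one_mem_star_mul (G.star x))
  rwa [G.star_star' x] at h

variable {F : Set H} (hF : G.IsClosed F)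
include hF

lemma one_mem_closed : G.one ∈ F := by
  obtain ⟨f, hf⟩ := hF.1
  refine hF.2 ?_
  rw [mem_smul_iff]
  exact ⟨G.star f, ⟨f, hf, rfl⟩, f, hf, G.one_mem_star_mul f⟩

lemma star_mem_closed {a : H} (ha : a ∈ F) : G.star a ∈ F := by
  refine hF.2 ?_
  rw [mem_smul_iff]
  refine ⟨G.star a, ⟨a, ha, rfl⟩, G.one, G.one_mem_closed hF, ?_⟩
  rw [G.hmul_one]; rfl

lemma mul_mem_closed {a b : H} (ha : a ∈ F) (hb : b ∈ F) : G.hmul a b ⊆ F := by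
  intro x hx
  refine hF.2 ?_
  rw [mem_smul_iff]
  exact ⟨G.star (G.star a), ⟨G.star a, G.star_mem_closed hF ha, rfl⟩, b, hb, by
    rw [G.star_star']; exact hx⟩

lemma cls_of_mem {x : H} (hx : x ∈ F) : G.cls F x = F := by
  apply Set.Subset.antisymm
  · intro z hz
    rw [Hypergroup.cls, mem_smul_iff] at hz
    obtain ⟨a, ha, b, hb, hz⟩ := hz
    rw [mem_smul_iff] at ha
    obtain ⟨f, hf, x', hx', hfa⟩ := ha
    rw [Set.mem_singleton_iff] at hx'
    subst hx'
    have haF : a ∈ F := G.mul_mem_closed hF hf hx hfa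
    exact G.mul_mem_closed hF haF hb hz
  · intro f hf
    -- f ∈ ⋃ y ∈ hmul (star x) x, hmul f y  since 1 ∈ hmul (star x) x and f ∈ hmul f 1
    have h1 : f ∈ ⋃ y ∈ G.hmul (G.star x) x, G.hmul f y := by
      refine Set.mem_biUnion (G.one_mem_star_mul x) ?_
      rw [G.hmul_one]; rfl
    rw [G.assoc f (G.star x) x] at h1
    obtain ⟨_, ⟨y, rfl⟩, _, ⟨hy, rfl⟩, hfyx⟩ := h1
    have hyF : y ∈ F := G.mul_mem_closed hF hf (G.star_mem_closed hF hx) hy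
    rw [Hypergroup.cls, mem_smul_iff]
    refine ⟨f, ?_, G.one, G.one_mem_closed hF, by rw [G.hmul_one]; rfl⟩
    rw [mem_smul_iff]
    exact ⟨y, hyF, x, rfl, hfyx⟩

lemma mem_cls_self (x : H) : x ∈ G.cls F x := by
  rw [Hypergroup.cls, mem_smul_iff]
  refine ⟨x, ?_, G.one, G.one_mem_closed hF, by rw [G.hmul_one]; rfl⟩
  rw [mem_smul_iff]
  exact ⟨G.one, G.one_mem_closed hF, x, rfl, G.mem_one_mul x⟩

end Aux
end Hypergroup

/-- a closed subset `F` is strongly normal in `H` iff the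
quotient `H//F` is thin, i.e. `(h^F)*(h^F) = {x^F | x ∈ h*Fh} = {1^F} = {F}`
for every `h ∈ H`. -/
theorem stronglyNormal_iff_quot_thin {H : Type*} (G : Hypergroup H) (F : Set H)
    (hF : G.IsClosed F) :
    G.IsStronglyNormalIn F Set.univ ↔
      ∀ h : H, G.cls F '' (G.smul (G.smul {G.star h} F) {h}) = {F} := by
  constructor
  · intro hsn h
    apply Set.Subset.antisymm
    · rintro _ ⟨x, hx, rfl⟩
      rw [Set.mem_singleton_iff]
      exact G.cls_of_mem hF (hsn h (Set.mem_univ h) hx)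
    · intro S hS
      rw [Set.mem_singleton_iff] at hS
      subst hS
      refine ⟨G.one, ?_, G.cls_of_mem hF (G.one_mem_closed hF)⟩
      rw [G.mem_smul_iff]
      refine ⟨G.star h, ?_, h, rfl, G.one_mem_star_mul h⟩
      rw [G.mem_smul_iff]
      refine ⟨G.star h, rfl, G.one, G.one_mem_closed hF, by rw [G.hmul_one]; rfl⟩
  · intro hq h _ x hx
    have hc : G.cls F x = F := by
      have := (hq h) ▸ Set.mem_image_of_mem (G.cls F) hx
      rwa [Set.mem_singleton_iff] at this
    rw [← hc]
    exact G.mem_cls_self hF x
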